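/- The set of return words on a non-empty prefix u of a uniformly recurrent sequence X is a code: the induced monoid morphism Θ_{X,u} from the free monoid on the (finite) set of return words to A* is injective. -/
import Mathlib


namespace Cobham

open Filter

variable {A : Type*} {B : Type*}

/-- The factor `X_i X_{i+1} ... X_{i+n-1}` of the sequence `X`. -/
def word (X : ℕ → A) (i n : ℕ) : List A := (List.range n).map fun k => X (i + k)

/-- `u` occurs in `X` at position `i`. -/
def OccursAt (X : ℕ → A) (u : List A) (i : ℕ) : Prop := word X i u.length = u

def IsFactor (X : ℕ → A) (u : List A) : Prop := ∃ i, OccursAt X u i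

def IsPrefix (X : ℕ → A) (u : List A) : Prop := OccursAt X u 0

/-- Uniformly recurrent: gaps between successive occurrences of any factor are bounded. -/
def UnifRec (X : ℕ → A) : Prop :=
  ∀ u, IsFactor X u → ∃ g : ℕ, ∀ i : ℕ, ∃ j, i ≤ j ∧ j ≤ i + g ∧ OccursAt X u j

/-- Return words on `u`: factors between two successive occurrences of `u` in `X`. -/
def ReturnWords (X : ℕ → A) (u : List A) : Set (List A) :=
  { v | ∃ i j, OccursAt X u i ∧ OccursAt X u j ∧ i < j ∧
      (∀ k, i < k → k < j → ¬ OccursAt X u k) ∧ v = word X i (j - i) }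

/-- Application of a morphism to a word, by concatenation. -/
def wordApply (σ : A → List B) (w : List A) : List B := w.flatMap σ

/-- Iterate of a morphism. -/
def mPow (σ : A → List A) : ℕ → A → List A
  | 0 => fun a => [a]
  | k + 1 => fun a => wordApply σ (mPow σ k a)

def Nonerasing (σ : A → List A) : Prop := ∀ a, σ a ≠ []

/-- Primitivity: some power of the morphism maps every letter to a word
containing every letter. -/
def Primitive (σ : A → List A) : Prop := ∃ k, 0 < k ∧ ∀ a b : A, b ∈ mPow σ k a

/-- Primitivity restricted to a set of letters. -/
def PrimitiveOn (σ : A → List A) (S : Set A) : Prop :=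
  ∃ k, 0 < k ∧ ∀ a ∈ S, ∀ b ∈ S, b ∈ mPow σ k a

/-- `X` is a fixed point of `σ`: the image of every prefix of `X` is a prefix of `X`. -/
def IsFixedPt (σ : A → List A) (X : ℕ → A) : Prop :=
  ∀ n, OccursAt X (wordApply σ (word X 0 n)) 0

def UltPeriodic (X : ℕ → A) : Prop :=
  ∃ N p : ℕ, 0 < p ∧ ∀ n, N ≤ n → X (n + p) = X n

def Periodic (X : ℕ → A) : Prop := ∃ p : ℕ, 0 < p ∧ ∀ n, X (n + p) = X n

/-- `u` occurs at position `i` inside the word `w`. -/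
def WOcc (u w : List A) (i : ℕ) : Prop :=
  i + u.length ≤ w.length ∧ (w.drop i).take u.length = u

/-- `D` is the derived sequence of `X` on `u`: a sequence of return words on `u`
whose concatenation is `X`. -/
def IsDerived (X : ℕ → A) (u : List A) (D : ℕ → List A) : Prop :=
  (∀ n, D n ∈ ReturnWords X u) ∧ ∀ n, OccursAt X ((word D 0 n).flatten) 0

/-- `τu` is the return substitution of `τ` on `u` (on the alphabet of return words):
`Θ_u ∘ τ_u = τ ∘ Θ_u`. -/
def RetSub (τ : A → List A) (X : ℕ → A) (u : List A)
    (τu : List A → List (List A)) : Prop :=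
  ∀ r ∈ ReturnWords X u,
    (∀ s ∈ τu r, s ∈ ReturnWords X u) ∧ (τu r).flatten = wordApply τ r

/-- Eigenvalue of a complex matrix. -/
def IsEig {n : Type*} [Fintype n] (M : Matrix n n ℂ) (μ : ℂ) : Prop :=
  ∃ v : n → ℂ, v ≠ 0 ∧ M.mulVec v = μ • v

/-- Incidence matrix of a morphism, as a complex matrix. -/
def incMat [Fintype A] [DecidableEq A] (σ : A → List A) : Matrix A A ℂ :=
  Matrix.of fun i j => (((σ j).count i : ℕ) : ℂ)

/-- Incidence matrix of a return substitution, indexed by the set of return words. -/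
def retMat [DecidableEq A] (τu : List A → List (List A)) (S : Set (List A))
    [Fintype S] : Matrix S S ℂ :=
  Matrix.of fun i j => (((τu (j : List A)).count (i : List A) : ℕ) : ℂ)

/-- `α` is the dominant eigenvalue of the incidence matrix of `σ`. -/
def IsDomEig [Fintype A] [DecidableEq A] (σ : A → List A) (α : ℝ) : Prop :=
  IsEig (incMat σ) (α : ℂ) ∧ ∀ μ : ℂ, IsEig (incMat σ) μ → ‖μ‖ ≤ α

/-- `X` is `α`-substitutive: the image under a letter-to-letter morphism of the
fixed point of a primitive substitution with dominant eigenvalue `α`. -/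
def IsSubstitutiveWith {A : Type*} (α : ℝ) (X : ℕ → A) : Prop :=
  ∃ (C : Type) (hF : Fintype C) (hD : DecidableEq C) (σ : C → List C) (c : C)
    (Y : ℕ → C) (ψ : C → A),
    Nonerasing σ ∧ (σ c).head? = some c ∧ Primitive σ ∧
    Y 0 = c ∧ IsFixedPt σ Y ∧ (∀ n, X n = ψ (Y n)) ∧ @IsDomEig C hF hD σ α

/-- Perron number: a real algebraic integer `α ≥ 1` strictly dominating the
absolute values of its other conjugates. -/
def IsPerron (α : ℝ) : Prop :=
  1 ≤ α ∧ IsIntegral ℤ α ∧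
    ∀ β : ℂ, Polynomial.aeval β (minpoly ℤ α) = 0 → β ≠ (α : ℂ) → ‖β‖ < α

lemma word_length (X : ℕ → A) (i n : ℕ) : (word X i n).length = n := by
  simp [word]

lemma word_append (X : ℕ → A) (i a b : ℕ) :
    word X i (a + b) = word X i a ++ word X (i + a) b := by
  simp only [word, List.range_add, List.map_append, List.map_map]
  congr 1
  apply List.map_congr_left
  intro k _
  simp [Function.comp]
  ring_nf

lemma word_prefix (X : ℕ → A) (i : ℕ) {m n : ℕ} (h : m ≤ n) :
    word X i m <+: word X i n := by
  refine ⟨word X (i + m) (n - m), ?_⟩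
  rw [← word_append]
  congr 1
  omega

lemma occursAt_of_prefix {X : ℕ → A} {u : List A} {i n : ℕ}
    (hp : u <+: word X i n) (hn : u.length ≤ n) : OccursAt X u i := by
  have h2 : word X i u.length <+: word X i n := word_prefix X i hn
  have := List.prefix_of_prefix_length_le hp h2 (by rw [word_length])
  exact (this.eq_of_length (by rw [word_length])).symm

lemma ret_ne_nil {X : ℕ → A} {u r : List A} (hr : r ∈ ReturnWords X u) : r ≠ [] := by
  obtain ⟨i, j, _, _, hij, _, rfl⟩ := hr
  intro h
  have := word_length X i (j - i)
  rw [h] at this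
  simp at this
  omega

lemma ret_u_prefix {X : ℕ → A} {u r : List A} (hr : r ∈ ReturnWords X u) :
    u <+: r ++ u := by
  obtain ⟨i, j, hi, hj, hij, _, rfl⟩ := hr
  have hu : word X j u.length = u := hj
  have hi' : word X i u.length = u := hi
  have hadd : i + (j - i) = j := by omega
  have key : word X i (j - i) ++ u = word X i (j - i + u.length) := by
    rw [word_append, hadd, hu]
  rw [key, ← hi']
  exact word_prefix X i (by rw [word_length]; exact Nat.le_add_left _ _)

lemma flatten_u_prefix {X : ℕ → A} {u : List A} :
    ∀ l : List (List A), (∀ w ∈ l, w ∈ ReturnWords X u) → u <+: l.flatten ++ u := by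
  intro l
  induction l with
  | nil => intro _; simp
  | cons r t ih =>
    intro h
    have h1 : u <+: r ++ u := ret_u_prefix (h r (by simp))
    have h2 : u <+: t.flatten ++ u := ih fun w hw => h w (by simp [hw])
    calc u <+: r ++ u := h1
    _ <+: r ++ (t.flatten ++ u) := (List.prefix_append_right_inj r).mpr h2
    _ = (r :: t).flatten ++ u := by simp

lemma ret_prefix_eq {X : ℕ → A} {u r₁ r₂ : List A}
    (h₁ : r₁ ∈ ReturnWords X u) (h₂ : r₂ ∈ ReturnWords X u)
    (hp : r₁ ++ u <+: r₂ ++ u) : r₁ = r₂ := by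
  have hne := ret_ne_nil h₁
  obtain ⟨i, j, hi, hj, hij, hbet, hr₂⟩ := h₂
  have hlen : r₁.length ≤ r₂.length := by
    have := hp.length_le
    simp at this
    omega
  have hr₂len : r₂.length = j - i := by rw [hr₂, word_length]
  have hform : r₂ ++ u = word X i (j - i + u.length) := by
    have hu : word X j u.length = u := hj
    have hadd : i + (j - i) = j := by omega
    rw [hr₂, word_append, hadd, hu]
  -- u occurs at position i + r₁.length
  have hocc : OccursAt X u (i + r₁.length) := by
    have hdecomp : word X i (j - i + u.length) =
        word X i r₁.length ++ word X (i + r₁.length) (j - i + u.length - r₁.length) := by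
      rw [← word_append]
      congr 1
      omega
    have hp' : r₁ ++ u <+: word X i (j - i + u.length) := hform ▸ hp
    have hr₁eq : r₁ = word X i r₁.length := by
      have ha : r₁ <+: word X i (j - i + u.length) := (List.prefix_append r₁ u).trans hp'
      have hb : word X i r₁.length <+: word X i (j - i + u.length) :=
        word_prefix X i (by omega)
      have := List.prefix_of_prefix_length_le ha hb (by rw [word_length])
      exact this.eq_of_length (by rw [word_length])
    rw [hdecomp, ← hr₁eq] at hp'
    have hu' : u <+: word X (i + r₁.length) (j - i + u.length - r₁.length) :=
      (List.prefix_append_right_inj r₁).mp hp'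
    exact occursAt_of_prefix hu' (by omega)
  have hpos : 0 < r₁.length := List.length_pos_iff.mpr hne
  have : ¬ (i + r₁.length < j) := by
    intro hlt
    exact hbet (i + r₁.length) (by omega) hlt hocc
  have hlene : r₁.length = r₂.length := by omega
  have : r₁ ++ u = r₂ ++ u := hp.eq_of_length (by simp [hlene])
  exact List.append_cancel_right this


theorem stmt2 {A : Type*} (X : ℕ → A) (u : List A)
    (hX : UnifRec X) (hu : u ≠ []) (hpre : IsPrefix X u) :
    ∀ l₁ l₂ : List (List A), (∀ w ∈ l₁, w ∈ ReturnWords X u) →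
      (∀ w ∈ l₂, w ∈ ReturnWords X u) → l₁.flatten = l₂.flatten → l₁ = l₂ := by
  intro l₁ l₂ h₁ h₂ heq
  induction l₁ generalizing l₂ with
  | nil =>
    cases l₂ with
    | nil => rfl
    | cons r t =>
      exfalso
      have := ret_ne_nil (h₂ r (by simp))
      simp at heq
      exact this heq.1
  | cons r₁ t₁ ih =>
    cases l₂ with
    | nil =>
      exfalso
      have := ret_ne_nil (h₁ r₁ (by simp))
      simp at heq
      exact this heq.1
    | cons r₂ t₂ =>
      have hr₁ := h₁ r₁ (by simp)
      have hr₂ := h₂ r₂ (by simp)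
      have ht₁ : ∀ w ∈ t₁, w ∈ ReturnWords X u := fun w hw => h₁ w (by simp [hw])
      have ht₂ : ∀ w ∈ t₂, w ∈ ReturnWords X u := fun w hw => h₂ w (by simp [hw])
      simp only [List.flatten_cons] at heq
      have hequ : r₁ ++ (t₁.flatten ++ u) = r₂ ++ (t₂.flatten ++ u) := by
        rw [← List.append_assoc, ← List.append_assoc, heq]
      have hp₁ : r₁ ++ u <+: r₂ ++ (t₂.flatten ++ u) := by
        rw [← hequ]
        exact (List.prefix_append_right_inj r₁).mpr (flatten_u_prefix t₁ ht₁)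
      have hp₂ : r₂ ++ u <+: r₂ ++ (t₂.flatten ++ u) :=
        (List.prefix_append_right_inj r₂).mpr (flatten_u_prefix t₂ ht₂)
      have hrr : r₁ = r₂ := by
        rcases le_total (r₁ ++ u).length (r₂ ++ u).length with h | h
        · exact ret_prefix_eq hr₁ hr₂ (List.prefix_of_prefix_length_le hp₁ hp₂ h)
        · exact (ret_prefix_eq hr₂ hr₁ (List.prefix_of_prefix_length_le hp₂ hp₁ h)).symm
      subst hrr
      have : t₁.flatten = t₂.flatten := List.append_cancel_left heq
      rw [ih t₂ ht₁ ht₂ this]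

end Cobham
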